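/- arXiv:1610.09408 — 8 statements merged into one kernel-verified Lean document; each statement's English description precedes it below -/
import Mathlib

section
/- For every k ∈ ℤ, the adapted basis elements satisfy the recursion Ψ⁺_{k+1} = R₊ Ψ⁺_k. -/
open Polynomial

/-- The Euler operator `D = x d/dx` on formal Laurent series: `(D f)_n = n • f_n`. -/
noncomputable def eulerD (R : Type*) [CommRing R] : Module.End R (LaurentSeries R) where
  toFun f :=
    { coeff := fun n => n • f.coeff n
      isPWO_support' := f.isPWO_support'.mono (fun n hn => by
        simp only [Function.mem_support, ne_eq] at hn ⊢
        exact fun h => hn (by rw [h, smul_zero])) }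
  map_add' f g := by
    ext n
    simp [smul_add]
  map_smul' r f := by
    ext n
    simp only [HahnSeries.coeff_smul, RingHom.id_apply, zsmul_eq_mul, smul_eq_mul]
    ring

/-- Multiplication by a fixed Laurent series `u`, as an `R`-linear endomorphism. -/
noncomputable def mulOp (R : Type*) [CommRing R] (u : LaurentSeries R) :
    Module.End R (LaurentSeries R) where
  toFun f := u * f
  map_add' f g := mul_add u f g
  map_smul' r f := by
    simp only [RingHom.id_apply]
    rw [← HahnSeries.C_mul_eq_smul, ← HahnSeries.C_mul_eq_smul, mul_left_comm]

/-- Multiplication by `x` on formal Laurent series. -/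
noncomputable def mulX (R : Type*) [CommRing R] : Module.End R (LaurentSeries R) :=
  mulOp R (HahnSeries.single (1 : ℤ) (1 : R))

/-- The recursion operator `R₊ = γ x G(β D)`. -/
noncomputable def Rplus (R : Type*) [CommRing R] (β γ : R) (G : R[X]) :
    Module.End R (LaurentSeries R) :=
  γ • (mulX R ∘ₗ Polynomial.aeval (β • eulerD R) G)

/-- The recursion operator `R₋ = γ x G(−β D)`. -/
noncomputable def Rminus (R : Type*) [CommRing R] (β γ : R) (G : R[X]) :
    Module.End R (LaurentSeries R) :=
  γ • (mulX R ∘ₗ Polynomial.aeval ((-β) • eulerD R) G)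



private lemma eulerD_pow_coeff_aux (R : Type*) [CommRing R] (β : R) (i : ℕ)
    (f : LaurentSeries R) (n : ℤ) :
    (((β • eulerD R)^i) f).coeff n = ((n : R) * β)^i * f.coeff n := by
  induction i generalizing f with
  | zero => simp
  | succ i ih =>
    rw [pow_succ, Module.End.mul_apply, ih]
    have : ((β • eulerD R) f).coeff n = (n : R) * β * f.coeff n := by
      simp only [LinearMap.smul_apply, HahnSeries.coeff_smul]
      show β * (n • f.coeff n) = _
      rw [zsmul_eq_mul]; ring
    rw [this]; ring

private lemma eulerD_aeval_coeff_aux (R : Type*) [CommRing R] (β : R) (G : R[X])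
    (f : LaurentSeries R) (n : ℤ) :
    ((Polynomial.aeval (β • eulerD R) G) f).coeff n = G.eval ((n : R) * β) * f.coeff n := by
  rw [Polynomial.aeval_eq_sum_range, Polynomial.eval_eq_sum_range]
  rw [LinearMap.sum_apply]
  show (HahnSeries.coeff.addMonoidHom n) (∑ d ∈ Finset.range (G.natDegree + 1),
      (G.coeff d • ((β • eulerD R) ^ d)) f) = _
  rw [map_sum]
  show (∑ x ∈ Finset.range (G.natDegree + 1),
      ((G.coeff x • ((β • eulerD R) ^ x)) f).coeff n) = _
  simp only [LinearMap.smul_apply]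
  simp only [HahnSeries.coeff_smul, eulerD_pow_coeff_aux, smul_eq_mul, Finset.sum_mul, mul_assoc]

/-- the adapted basis elements `Ψ⁺_k`, with coefficients
`(Ψ⁺_k)_n = γ ρ_{n−1} h_{n−k}`, satisfy the recursion `Ψ⁺_{k+1} = R₊ Ψ⁺_k`. -/
theorem adapted_basis_plus_recursion (R : Type*) [CommRing R] (β γ : R) (G : R[X])
    (hG : G.coeff 0 = 1)
    (ρ : ℤ → Rˣ) (hρ0 : ρ 0 = 1)
    (hρ : ∀ n : ℤ, (ρ n : R) = γ * G.eval ((n : R) * β) * (ρ (n - 1) : R))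
    (L : ℕ) (hL : 1 ≤ L) (s : ℕ → R)
    (h : ℤ → R) (h0 : h 0 = 1) (hneg : ∀ n : ℤ, n < 0 → h n = 0)
    (hrec : ∀ n : ℤ, 1 ≤ n →
      β * (n : R) * h n = ∑ k ∈ Finset.Icc 1 L, (k : R) * s k * h (n - (k : ℤ)))
    (Ψp : ℤ → LaurentSeries R)
    (hΨ : ∀ k n : ℤ, (Ψp k).coeff n = γ * (ρ (n - 1) : R) * h (n - k)) :
    ∀ k : ℤ, Ψp (k + 1) = Rplus R β γ G (Ψp k) := by
  intro k
  ext n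
  rw [hΨ]
  show _ = (γ • ((mulX R ∘ₗ Polynomial.aeval (β • eulerD R) G) (Ψp k))).coeff n
  rw [HahnSeries.coeff_smul, LinearMap.comp_apply]
  show _ = γ • ((HahnSeries.single (1:ℤ) (1:R)) * _).coeff n
  rw [show n = (n - 1) + 1 by ring, HahnSeries.coeff_single_mul_add, one_mul,
    eulerD_aeval_coeff_aux, hΨ]
  have hρ' := hρ (n - 1)
  have : n - 1 - 1 + 1 - 1 = n - 1 - 1 := by ring
  push_cast at hρ' ⊢
  rw [smul_eq_mul]
  calc γ * (ρ (n - 1 + 1 - 1) : R) * h (n - 1 + 1 - (k + 1))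
      = γ * (ρ (n - 1) : R) * h (n - 1 - k) := by ring_nf
    _ = γ * (γ * G.eval (((n:R) - 1) * β) * (ρ (n - 1 - 1) : R)) * h (n - 1 - k) := by
        rw [hρ']
    _ = γ * (G.eval (((n:R) - 1) * β) * (γ * (ρ (n - 1 - 1) : R) * h (n - 1 - k))) := by ring
end

section
/- For every k ∈ ℤ, the dual adapted basis elements satisfy the recursion Ψ⁻_{k+1} = R₋ Ψ⁻_k. -/
open Polynomial

lemma euler_pow_coeff (R : Type*) [CommRing R] (b : R) (i : ℕ) :
    ∀ (f : LaurentSeries R) (n : ℤ),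
      (((b • eulerD R) ^ i) f).coeff n = (b * n) ^ i * f.coeff n := by
  induction i with
  | zero => intro f n; simp
  | succ i ih =>
      intro f n
      rw [pow_succ, Module.End.mul_apply, ih]
      have : ((b • eulerD R) f).coeff n = (b * n) * f.coeff n := by
        show b • ((n : ℤ) • f.coeff n) = (b * n) * f.coeff n
        rw [zsmul_eq_mul, smul_eq_mul]; ring
      rw [this]; ring

lemma aeval_euler_coeff (R : Type*) [CommRing R] (b : R) (p : R[X])
    (f : LaurentSeries R) (n : ℤ) :
    ((Polynomial.aeval (b • eulerD R) p) f).coeff n = p.eval (b * n) * f.coeff n := by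
  induction p using Polynomial.induction_on' with
  | add p q hp hq =>
      rw [map_add, LinearMap.add_apply, HahnSeries.coeff_add, hp, hq,
        Polynomial.eval_add, add_mul]
  | monomial i a =>
      rw [Polynomial.aeval_monomial, Polynomial.eval_monomial, Module.End.mul_apply,
        Module.algebraMap_end_apply, HahnSeries.coeff_smul, smul_eq_mul,
        euler_pow_coeff]
      ring

lemma mulX_coeff (R : Type*) [CommRing R] (f : LaurentSeries R) (n : ℤ) :
    (mulX R f).coeff n = f.coeff (n - 1) := by
  show (HahnSeries.single (1 : ℤ) (1 : R) * f).coeff n = f.coeff (n - 1)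
  have h := HahnSeries.coeff_single_mul_add (r := (1 : R)) (x := f) (a := n - 1) (b := (1 : ℤ))
  rw [show (n - 1) + (1 : ℤ) = n by ring] at h
  simpa using h

/-- the dual adapted basis elements `Ψ⁻_k`, with coefficients
`(Ψ⁻_k)_n = ρ_{−n}⁻¹ h̄_{n−k}`, satisfy the recursion `Ψ⁻_{k+1} = R₋ Ψ⁻_k`. -/
theorem adapted_basis_minus_recursion (R : Type*) [CommRing R] (β γ : R) (G : R[X])
    (hG : G.coeff 0 = 1)
    (ρ : ℤ → Rˣ) (hρ0 : ρ 0 = 1)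
    (hρ : ∀ n : ℤ, (ρ n : R) = γ * G.eval ((n : R) * β) * (ρ (n - 1) : R))
    (L : ℕ) (hL : 1 ≤ L) (s : ℕ → R)
    (hbar : ℤ → R) (hbar0 : hbar 0 = 1) (hbarneg : ∀ n : ℤ, n < 0 → hbar n = 0)
    (hbarrec : ∀ n : ℤ, 1 ≤ n →
      β * (n : R) * hbar n = -∑ k ∈ Finset.Icc 1 L, (k : R) * s k * hbar (n - (k : ℤ)))
    (Ψm : ℤ → LaurentSeries R)
    (hΨ : ∀ k n : ℤ, (Ψm k).coeff n = ((ρ (-n))⁻¹ : Rˣ) * hbar (n - k)) :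
    ∀ k : ℤ, Ψm (k + 1) = Rminus R β γ G (Ψm k) := by
  intro k
  ext1
  ext n
  have hcoeff : (Rminus R β γ G (Ψm k)).coeff n
      = γ * (G.eval ((-β) * ((n : ℤ) - 1 : ℤ)) * (Ψm k).coeff (n - 1)) := by
    show (γ • (mulX R ((Polynomial.aeval ((-β) • eulerD R) G) (Ψm k)))).coeff n = _
    rw [HahnSeries.coeff_smul, smul_eq_mul, mulX_coeff, aeval_euler_coeff]
  rw [hcoeff, hΨ, hΨ]
  have key : ((ρ (1 - n) : R)) = γ * G.eval (((1 - n : ℤ) : R) * β) * (ρ (-n) : R) := by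
    have := hρ (1 - n)
    simpa using this
  have harg : ((-β) * (((n : ℤ) - 1 : ℤ) : R)) = ((1 - n : ℤ) : R) * β := by
    push_cast; ring
  rw [harg]
  have hinv : (↑(ρ (-n))⁻¹ : R) = γ * G.eval (((1 - n : ℤ) : R) * β) * (↑(ρ (1 - n))⁻¹ : R) := by
    have h2 : (ρ (1 - n) : R) * (↑(ρ (1 - n))⁻¹ : R) = 1 := by
      exact_mod_cast Units.mul_inv (ρ (1 - n))
    have h3 : (↑(ρ (-n))⁻¹ : R) * ((ρ (-n)) : R) = 1 := by
      exact_mod_cast Units.inv_mul (ρ (-n))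
    calc (↑(ρ (-n))⁻¹ : R) = (↑(ρ (-n))⁻¹ : R) * ((ρ (1 - n) : R) * (↑(ρ (1 - n))⁻¹ : R)) := by
          rw [h2, mul_one]
      _ = γ * G.eval (((1 - n : ℤ) : R) * β) * (↑(ρ (1 - n))⁻¹ : R)
            * ((↑(ρ (-n))⁻¹ : R) * ((ρ (-n)) : R)) := by rw [key]; ring
      _ = _ := by rw [h3, mul_one]
  have hsub : -(n - 1) = 1 - n := by ring
  rw [hsub, hinv]
  have hsh : n - (k + 1) = n - 1 - k := by ring
  rw [hsh]
  ring
end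

section
/- For all k, m ∈ ℤ, the adapted bases are dual with respect to the residue pairing: (Ψ⁺_k, Ψ⁻_m) = γ if k + m = 1 and (Ψ⁺_k, Ψ⁻_m) = 0 otherwise, where (f, g) denotes the coefficient of x¹ in the product f·g of formal Laurent series (formally (f,g) = (1/2πi)∮ f(x)g(x) dx/x²). In particular every Ψ⁺_k with k ≤ 0 is orthogonal to every Ψ⁻_l with l ≤ 0. -/
open Polynomial

/-- duality of the adapted bases under the residue pairing
`(f, g) := [x¹] (f·g)`: one has `(Ψ⁺_k, Ψ⁻_m) = γ δ_{k+m,1}`; in particular each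
`Ψ⁺_k` with `k ≤ 0` is orthogonal to each `Ψ⁻_l` with `l ≤ 0`. -/
theorem adapted_basis_duality (R : Type*) [CommRing R] (β γ : R) (G : R[X])
    (hG : G.coeff 0 = 1)
    (ρ : ℤ → Rˣ) (hρ0 : ρ 0 = 1)
    (hρ : ∀ n : ℤ, (ρ n : R) = γ * G.eval ((n : R) * β) * (ρ (n - 1) : R))
    (h hbar : ℤ → R) (h0 : h 0 = 1) (hbar0 : hbar 0 = 1)
    (hneg : ∀ n : ℤ, n < 0 → h n = 0) (hbarneg : ∀ n : ℤ, n < 0 → hbar n = 0)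
    (hconv : ∀ n : ℤ, 0 ≤ n →
      ∑ j ∈ Finset.Icc 0 n, h j * hbar (n - j) = if n = 0 then 1 else 0)
    (Ψp Ψm : ℤ → LaurentSeries R)
    (hΨp : ∀ k n : ℤ, (Ψp k).coeff n = γ * (ρ (n - 1) : R) * h (n - k))
    (hΨm : ∀ k n : ℤ, (Ψm k).coeff n = ((ρ (-n))⁻¹ : Rˣ) * hbar (n - k)) :
    (∀ k m : ℤ, (Ψp k * Ψm m).coeff 1 = if k + m = 1 then γ else 0) ∧
    (∀ k l : ℤ, k ≤ 0 → l ≤ 0 → (Ψp k * Ψm l).coeff 1 = 0) := by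

  have key : ∀ k m : ℤ, (Ψp k * Ψm m).coeff 1 = if k + m = 1 then γ else 0 := by
    intro k m
    classical
    set S : Finset (ℤ × ℤ) := (Finset.Icc k (1 - m)).image (fun n => (n, 1 - n)) with hS
    have hsub : Finset.antidiagonal (Ψp k).isPWO_support (Ψm m).isPWO_support 1 ⊆ S := by
      intro ij hij
      rw [Finset.mem_antidiagonal] at hij
      obtain ⟨h1, h2, h3⟩ := hij
      have hk : k ≤ ij.1 := by
        by_contra hc
        push_neg at hc
        exact h1 (by rw [hΨp k ij.1, hneg (ij.1 - k) (by omega), mul_zero])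
      have hm : m ≤ ij.2 := by
        by_contra hc
        push_neg at hc
        exact h2 (by rw [hΨm m ij.2, hbarneg (ij.2 - m) (by omega), mul_zero])
      rw [hS, Finset.mem_image]
      exact ⟨ij.1, Finset.mem_Icc.mpr ⟨hk, by omega⟩, by
        rw [Prod.ext_iff]; constructor <;> simp <;> omega⟩
    have hzero : ∀ ij ∈ S,
        ij ∉ Finset.antidiagonal (Ψp k).isPWO_support (Ψm m).isPWO_support 1 →
        (Ψp k).coeff ij.1 * (Ψm m).coeff ij.2 = 0 := by
      intro ij hijS hij
      rw [Finset.mem_antidiagonal] at hij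
      rw [hS, Finset.mem_image] at hijS
      obtain ⟨n, _, hn⟩ := hijS
      have hsum : ij.1 + ij.2 = 1 := by rw [← hn]; ring
      by_cases h1 : (Ψp k).coeff ij.1 = 0
      · rw [h1, zero_mul]
      by_cases h2 : (Ψm m).coeff ij.2 = 0
      · rw [h2, mul_zero]
      exact absurd ⟨h1, h2, hsum⟩ hij
    rw [HahnSeries.coeff_mul, Finset.sum_subset hsub hzero]
    have hinj : Set.InjOn (fun n : ℤ => (n, 1 - n)) (Finset.Icc k (1 - m)) := by
      intro a _ b _ hab
      exact (Prod.ext_iff.mp hab).1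
    rw [hS, Finset.sum_image hinj]
    have hterm : ∀ n ∈ Finset.Icc k (1 - m),
        (Ψp k).coeff n * (Ψm m).coeff (1 - n)
          = γ * (h (n - k) * hbar ((1 - k - m) - (n - k))) := by
      intro n _
      rw [hΨp, hΨm]
      have : (-(1 - n)) = n - 1 := by ring
      rw [this]
      have hu : (ρ (n - 1) : R) * ((ρ (n - 1))⁻¹ : Rˣ) = 1 := by
        exact_mod_cast Units.mul_inv (ρ (n - 1))
      have harg : (1 - n - m) = (1 - k - m) - (n - k) := by ring
      rw [harg]
      calc γ * (ρ (n - 1) : R) * h (n - k) * (((ρ (n - 1))⁻¹ : Rˣ) * hbar ((1 - k - m) - (n - k)))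
          = γ * ((ρ (n - 1) : R) * ((ρ (n - 1))⁻¹ : Rˣ)) * (h (n - k) * hbar ((1 - k - m) - (n - k))) := by ring
        _ = γ * (h (n - k) * hbar ((1 - k - m) - (n - k))) := by rw [hu]; ring
    rw [Finset.sum_congr rfl hterm, ← Finset.mul_sum]
    set N : ℤ := 1 - k - m with hN
    have hIcc : Finset.Icc k (1 - m) = Finset.map (addLeftEmbedding k) (Finset.Icc 0 N) := by
      rw [Finset.map_add_left_Icc]
      congr 1 <;> omega
    rw [hIcc, Finset.sum_map]
    have hre : ∀ j ∈ Finset.Icc (0 : ℤ) N,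
        h (addLeftEmbedding k j - k) * hbar (N - (addLeftEmbedding k j - k))
          = h j * hbar (N - j) := by
      intro j _
      have : addLeftEmbedding k j - k = j := by simp [addLeftEmbedding]
      rw [this]
    rw [Finset.sum_congr rfl hre]
    by_cases hN0 : 0 ≤ N
    · rw [hconv N hN0]
      by_cases hc : k + m = 1
      · rw [if_pos (by omega : N = 0), if_pos hc, mul_one]
      · rw [if_neg (by omega : ¬N = 0), if_neg hc, mul_zero]
    · have : Finset.Icc (0 : ℤ) N = ∅ := Finset.Icc_eq_empty (by omega)
      rw [this, Finset.sum_empty, mul_zero]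
      rw [if_neg (by omega : ¬k + m = 1)]
  exact ⟨key, fun k l hk hl => by rw [key k l, if_neg (by omega)]⟩
end

section
/- The series Ψ⁺₀ satisfies the quantum spectral curve equation (β•D − S(R₊)) Ψ⁺₀ = 0, where S(R₊) := Σ_{k=1}^L k s_k R₊^k is the polynomial S evaluated at the operator R₊; that is, β•(D Ψ⁺₀) = Σ_{k=1}^L k s_k R₊^k Ψ⁺₀. -/
open Polynomial

lemma powD_coeff {R : Type*} [CommRing R] (β : R) (f : LaurentSeries R) (n : ℤ) :
    ∀ i : ℕ, (((β • eulerD R) ^ i) f).coeff n = ((n : R) * β) ^ i * f.coeff n := by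
  intro i
  induction i with
  | zero => simp
  | succ i ih =>
    rw [pow_succ', Module.End.mul_apply, LinearMap.smul_apply, HahnSeries.coeff_smul]
    have : (eulerD R (((β • eulerD R) ^ i) f)).coeff n
        = n • (((β • eulerD R) ^ i) f).coeff n := rfl
    rw [this, ih, zsmul_eq_mul, pow_succ, smul_eq_mul]
    push_cast
    ring

lemma aevalD_coeff {R : Type*} [CommRing R] (β : R) (G : R[X]) (f : LaurentSeries R)
    (n : ℤ) :
    ((Polynomial.aeval (β • eulerD R) G) f).coeff n = G.eval ((n : R) * β) * f.coeff n := by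
  induction G using Polynomial.induction_on' with
  | add p q hp hq =>
    rw [map_add, LinearMap.add_apply, HahnSeries.coeff_add, hp, hq, Polynomial.eval_add,
      add_mul]
  | monomial i a =>
    rw [Polynomial.aeval_monomial, Module.End.mul_apply, Module.algebraMap_end_apply,
      HahnSeries.coeff_smul, powD_coeff, Polynomial.eval_monomial, smul_eq_mul]
    ring

lemma Rplus_coeff {R : Type*} [CommRing R] (β γ : R) (G : R[X]) (f : LaurentSeries R)
    (n : ℤ) :
    ((Rplus R β γ G) f).coeff n = γ * G.eval (((n : R) - 1) * β) * f.coeff (n - 1) := by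
  rw [Rplus, LinearMap.smul_apply, HahnSeries.coeff_smul, LinearMap.comp_apply]
  have hx : ((mulX R) ((Polynomial.aeval (β • eulerD R) G) f)).coeff n
      = ((Polynomial.aeval (β • eulerD R) G) f).coeff (n - 1) := by
    show ((HahnSeries.single (1 : ℤ) (1 : R)) * _).coeff n = _
    have := HahnSeries.coeff_single_mul_add (r := (1 : R)) (a := n - 1) (b := (1 : ℤ))
      (x := (Polynomial.aeval (β • eulerD R) G) f)
    rw [one_mul] at this
    rw [show n = (n - 1) + 1 by ring, this]
    ring_nf
  rw [hx, aevalD_coeff, smul_eq_mul]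
  push_cast
  ring

/-- the quantum spectral curve equation `(β D − S(R₊)) Ψ⁺₀ = 0`,
i.e. `β • (D Ψ⁺₀) = Σ_{k=1}^L k s_k R₊^k Ψ⁺₀`. -/
theorem quantum_spectral_curve (R : Type*) [CommRing R] (β γ : R) (G : R[X])
    (hG : G.coeff 0 = 1)
    (ρ : ℤ → Rˣ) (hρ0 : ρ 0 = 1)
    (hρ : ∀ n : ℤ, (ρ n : R) = γ * G.eval ((n : R) * β) * (ρ (n - 1) : R))
    (L : ℕ) (hL : 1 ≤ L) (s : ℕ → R)
    (h : ℤ → R) (h0 : h 0 = 1) (hneg : ∀ n : ℤ, n < 0 → h n = 0)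
    (hrec : ∀ n : ℤ, 1 ≤ n →
      β * (n : R) * h n = ∑ k ∈ Finset.Icc 1 L, (k : R) * s k * h (n - (k : ℤ)))
    (Ψ0 : LaurentSeries R)
    (hΨ0 : ∀ n : ℤ, Ψ0.coeff n = γ * (ρ (n - 1) : R) * h n) :
    β • (eulerD R Ψ0) =
      ∑ k ∈ Finset.Icc 1 L, ((k : R) * s k) • ((Rplus R β γ G ^ k) Ψ0) := by
  have key : ∀ (k : ℕ) (n : ℤ),
      ((Rplus R β γ G ^ k) Ψ0).coeff n = γ * (ρ (n - 1) : R) * h (n - k) := by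
    intro k
    induction k with
    | zero => intro n; simpa using hΨ0 n
    | succ k ih =>
      intro n
      rw [pow_succ', Module.End.mul_apply, Rplus_coeff, ih (n - 1)]
      have hr := hρ (n - 1)
      push_cast at hr ⊢
      rw [show n - 1 - (k : ℤ) = n - ((k : ℤ) + 1) by ring]
      calc γ * G.eval (((n : R) - 1) * β) * (γ * (ρ (n - 1 - 1) : R) * h (n - ((k:ℤ)+1)))
          = γ * (γ * G.eval (((n : R) - 1) * β) * (ρ (n - 1 - 1) : R)) * h (n - ((k:ℤ)+1)) := by
            ring
        _ = γ * (ρ (n - 1) : R) * h (n - ((k:ℤ)+1)) := by rw [← hr]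
  ext n
  have hsum : (∑ k ∈ Finset.Icc 1 L, ((k : R) * s k) • ((Rplus R β γ G ^ k) Ψ0)).coeff n
      = ∑ k ∈ Finset.Icc 1 L, ((k : R) * s k) * (γ * (ρ (n - 1) : R) * h (n - k)) := by
    rw [show (∑ k ∈ Finset.Icc 1 L, ((k : R) * s k) • ((Rplus R β γ G ^ k) Ψ0)).coeff n
        = ∑ k ∈ Finset.Icc 1 L, (((k : R) * s k) • ((Rplus R β γ G ^ k) Ψ0)).coeff n
      from map_sum (HahnSeries.coeff.addMonoidHom n) _ _]
    refine Finset.sum_congr rfl fun k hk => ?_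
    rw [HahnSeries.coeff_smul, key, smul_eq_mul]
  rw [hsum, HahnSeries.coeff_smul]
  have hD : (eulerD R Ψ0).coeff n = n • Ψ0.coeff n := rfl
  rw [hD, hΨ0 n, zsmul_eq_mul, smul_eq_mul]
  rcases le_or_gt 1 n with hn | hn
  · have := hrec n hn
    calc β * ((n : R) * (γ * (ρ (n - 1) : R) * h n))
        = (γ * (ρ (n - 1) : R)) * (β * (n : R) * h n) := by ring
      _ = (γ * (ρ (n - 1) : R)) * ∑ k ∈ Finset.Icc 1 L, (k : R) * s k * h (n - (k : ℤ)) := by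
          rw [this]
      _ = ∑ k ∈ Finset.Icc 1 L, ((k : R) * s k) * (γ * (ρ (n - 1) : R) * h (n - k)) := by
          rw [Finset.mul_sum]; exact Finset.sum_congr rfl fun k _ => by ring
  · -- n ≤ 0
    have hL0 : β * ((n : R) * (γ * (ρ (n - 1) : R) * h n)) = 0 := by
      rcases (show n ≤ 0 by omega).lt_or_eq with hlt | he
      · rw [hneg n hlt]; ring
      · rw [he]; simp
    rw [hL0]
    refine (Finset.sum_eq_zero fun k hk => ?_).symm
    have hk1 : 1 ≤ k := (Finset.mem_Icc.mp hk).1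
    have : n - (k : ℤ) < 0 := by
      have : (1 : ℤ) ≤ (k : ℤ) := by exact_mod_cast hk1
      omega
    rw [hneg _ this]; ring
end

section
/- For every k ∈ ℤ the adapted basis satisfies the constant-coefficient linear differential relation β•(D Ψ⁺_k) = k β • Ψ⁺_k + Σ_{m=1}^L m s_m Ψ⁺_{k+m}. (This is the componentwise form of the infinite system β D Ψ⃗⁺ = P⁺ Ψ⃗⁺, where the constant matrix P⁺ is upper triangular with diagonal entries P⁺_{kk} = kβ and entries P⁺_{kj} = (j−k) s_{j−k} above the diagonal.) -/
open Polynomial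

/-- the constant-coefficient linear differential system
`β • (D Ψ⁺_k) = kβ • Ψ⁺_k + Σ_{m=1}^L m s_m Ψ⁺_{k+m}` (componentwise form of
`β D Ψ⃗⁺ = P⁺ Ψ⃗⁺`). -/
theorem adapted_basis_plus_differential_system (R : Type*) [CommRing R] (β γ : R) (G : R[X])
    (hG : G.coeff 0 = 1)
    (ρ : ℤ → Rˣ) (hρ0 : ρ 0 = 1)
    (hρ : ∀ n : ℤ, (ρ n : R) = γ * G.eval ((n : R) * β) * (ρ (n - 1) : R))
    (L : ℕ) (hL : 1 ≤ L) (s : ℕ → R)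
    (h : ℤ → R) (h0 : h 0 = 1) (hneg : ∀ n : ℤ, n < 0 → h n = 0)
    (hrec : ∀ n : ℤ, 1 ≤ n →
      β * (n : R) * h n = ∑ k ∈ Finset.Icc 1 L, (k : R) * s k * h (n - (k : ℤ)))
    (Ψp : ℤ → LaurentSeries R)
    (hΨ : ∀ k n : ℤ, (Ψp k).coeff n = γ * (ρ (n - 1) : R) * h (n - k)) :
    ∀ k : ℤ, β • (eulerD R (Ψp k)) =
      ((k : R) * β) • Ψp k +
        ∑ m ∈ Finset.Icc 1 L, ((m : R) * s m) • Ψp (k + (m : ℤ)) := by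
  have key : ∀ j : ℤ, β * (j : R) * h j = ∑ m ∈ Finset.Icc 1 L, (m : R) * s m * h (j - m) := by
    intro j
    rcases lt_or_ge j 1 with hj | hj
    · rw [Finset.sum_congr rfl (fun m hm => ?_)]
      · rcases lt_or_eq_of_le (show j ≤ 0 by omega) with h' | h'
        · rw [hneg j h', mul_zero, Finset.sum_const_zero]
        · subst h'
          simp
      · have hm1 : 1 ≤ m := (Finset.mem_Icc.mp hm).1
        rw [hneg (j - m) (by omega), mul_zero]
    · exact hrec j hj
  intro k
  ext n
  have hsum : (∑ m ∈ Finset.Icc 1 L, ((m : R) * s m) • Ψp (k + (m : ℤ))).coeff n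
      = ∑ m ∈ Finset.Icc 1 L, (m : R) * s m * (γ * (ρ (n - 1) : R) * h (n - (k + m))) := by
    rw [show (∑ m ∈ Finset.Icc 1 L, ((m : R) * s m) • Ψp (k + (m : ℤ))).coeff n
        = (HahnSeries.coeff.addMonoidHom n) (∑ m ∈ Finset.Icc 1 L,
          ((m : R) * s m) • Ψp (k + (m : ℤ))) from rfl,
      map_sum (HahnSeries.coeff.addMonoidHom n) _ _]
    refine Finset.sum_congr rfl fun m _ => ?_
    simp [HahnSeries.coeff.addMonoidHom, hΨ, mul_comm]
  simp only [HahnSeries.coeff_add, HahnSeries.coeff_smul, hsum, hΨ, eulerD,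
    LinearMap.coe_mk, AddHom.coe_mk, smul_eq_mul, zsmul_eq_mul]
  have := key (n - k)
  have hkey : β * ((n : R) - (k : R)) * h (n - k)
      = ∑ m ∈ Finset.Icc 1 L, (m : R) * s m * h (n - (k + m)) := by
    have : ((n - k : ℤ) : R) = (n : R) - (k : R) := by push_cast; ring
    rw [← this]
    simpa [sub_sub] using key (n - k)
  have expand : β * ((n : R) * (γ * (ρ (n - 1) : R) * h (n - k)))
      = (k : R) * β * (γ * (ρ (n - 1) : R) * h (n - k))
        + γ * (ρ (n - 1) : R) * (β * ((n : R) - (k : R)) * h (n - k)) := by ring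
  rw [expand, hkey, Finset.mul_sum]
  congr 1
  refine Finset.sum_congr rfl fun m _ => ?_
  ring
end

section
/- For every i ∈ ℤ the adapted basis satisfies the finite-band multiplicative relation Ψ⁺_i = γ • (x · Σ_j Q⁺_{ij} Ψ⁺_j), where the sum is over the finitely many j with Q⁺_{ij} ≠ 0 (all such j satisfy i−1 ≤ j ≤ i−1+LM). (This is the componentwise form of the infinite system (γx)⁻¹ Ψ⃗⁺ = Q⁺ Ψ⃗⁺ with constant finite-band matrix Q⁺.) -/
open Polynomial

/-- The polynomial `S(r) = Σ_{k=1}^L k s_k r^k`, as a (Laurent) series in `r`. -/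
noncomputable def Spoly (R : Type*) [CommRing R] (L : ℕ) (s : ℕ → R) : LaurentSeries R :=
  ∑ k ∈ Finset.Icc 1 L, ((k : R) * s k) • HahnSeries.single (k : ℤ) (1 : R)

/-- The operator `V₊ = G(Δ₊)` with `Δ₊ = S(r) + β D_r`. -/
noncomputable def Vplus (R : Type*) [CommRing R] (β : R) (G : Polynomial R) (L : ℕ)
    (s : ℕ → R) : Module.End R (LaurentSeries R) :=
  Polynomial.aeval (mulOp R (Spoly R L s) + β • eulerD R) G

/-- The matrix entry `Q⁺_{ij}`: the coefficient of `r^j` in `V₊(r^{i−1})`. -/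
noncomputable def Qplus (R : Type*) [CommRing R] (β : R) (G : Polynomial R) (L : ℕ)
    (s : ℕ → R) (i j : ℤ) : R :=
  (Vplus R β G L s (HahnSeries.single (i - 1) (1 : R))).coeff j

lemma single_mul_coeff' {R : Type*} [CommRing R] (f : LaurentSeries R) (r : R) (j k : ℤ) :
    (HahnSeries.single k r * f).coeff j = r * f.coeff (j - k) := by
  have := HahnSeries.coeff_single_mul_add (r := r) (x := f) (a := j - k) (b := k)
  rw [sub_add_cancel] at this
  rw [this]

lemma smul_single' {R : Type*} [CommRing R] (c r : R) (k : ℤ) :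
    c • HahnSeries.single k r = HahnSeries.single k (c * r) := by
  ext n
  simp only [HahnSeries.coeff_smul, HahnSeries.coeff_single, smul_eq_mul, mul_ite, mul_zero]
  split_ifs <;> rfl

lemma delta_coeff {R : Type*} [CommRing R] (β : R) (L : ℕ) (s : ℕ → R)
    (f : LaurentSeries R) (j : ℤ) :
    ((mulOp R (Spoly R L s) + β • eulerD R) f).coeff j =
      (∑ k ∈ Finset.Icc 1 L, (k : R) * s k * f.coeff (j - (k : ℤ))) +
        β * (j : R) * f.coeff j := by
  rw [LinearMap.add_apply, HahnSeries.coeff_add, LinearMap.smul_apply, HahnSeries.coeff_smul]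
  have h2 : ((eulerD R) f).coeff j = (j : R) * f.coeff j := by
    simp [eulerD, zsmul_eq_mul]
  have h1 : ((mulOp R (Spoly R L s)) f).coeff j
      = ∑ k ∈ Finset.Icc 1 L, (k : R) * s k * f.coeff (j - (k : ℤ)) := by
    show (Spoly R L s * f).coeff j = _
    rw [Spoly, Finset.sum_mul]
    rw [show ((∑ k ∈ Finset.Icc 1 L,
          ((k : R) * s k) • HahnSeries.single (k : ℤ) (1:R) * f).coeff j)
        = ∑ k ∈ Finset.Icc 1 L,
          (((k : R) * s k) • HahnSeries.single (k : ℤ) (1:R) * f).coeff j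
      from map_sum (HahnSeries.coeff.addMonoidHom j) _ _]
    refine Finset.sum_congr rfl fun k hk => ?_
    rw [smul_single', mul_one, single_mul_coeff']
  rw [h1, h2, smul_eq_mul, ← mul_assoc]

lemma delta_pow_supp {R : Type*} [CommRing R] (β : R) (L : ℕ) (s : ℕ → R) (a : ℤ) :
    ∀ (p : ℕ) (j : ℤ),
      (((mulOp R (Spoly R L s) + β • eulerD R) ^ p)
          (HahnSeries.single a (1:R))).coeff j ≠ 0 →
      a ≤ j ∧ j ≤ a + (p : ℤ) * (L : ℤ) := by
  intro p
  induction p with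
  | zero =>
    intro j hj
    rw [pow_zero, Module.End.one_apply] at hj
    by_cases hja : j = a
    · subst hja; refine ⟨le_refl _, ?_⟩; simp
    · exact absurd (HahnSeries.coeff_single_of_ne hja) hj
  | succ p ih =>
    intro j hj
    rw [pow_succ', Module.End.mul_apply, delta_coeff] at hj
    set g := ((mulOp R (Spoly R L s) + β • eulerD R) ^ p) (HahnSeries.single a (1:R)) with hg
    have hcast : ((p + 1 : ℕ) : ℤ) * (L : ℤ) = (p : ℤ) * L + L := by push_cast; ring
    have hcases : (∑ k ∈ Finset.Icc 1 L, (k : R) * s k * g.coeff (j - (k : ℤ))) ≠ 0 ∨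
        β * (j : R) * g.coeff j ≠ 0 := by
      by_contra hc
      push_neg at hc
      rw [hc.1, hc.2, add_zero] at hj
      exact hj rfl
    rcases hcases with hc | hc
    · obtain ⟨k, hk, hknz⟩ := Finset.exists_ne_zero_of_sum_ne_zero hc
      have hgc : g.coeff (j - (k : ℤ)) ≠ 0 := fun hz => hknz (by rw [hz, mul_zero])
      obtain ⟨h1, h2⟩ := ih _ hgc
      obtain ⟨hk1, hk2⟩ := Finset.mem_Icc.mp hk
      have hk1' : (1 : ℤ) ≤ k := by exact_mod_cast hk1
      have hk2' : (k : ℤ) ≤ L := by exact_mod_cast hk2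
      rw [hcast]
      constructor <;> linarith
    · have hgc : g.coeff j ≠ 0 := fun hz => hc (by rw [hz, mul_zero])
      obtain ⟨h1, h2⟩ := ih _ hgc
      have hL0 : (0 : ℤ) ≤ L := by positivity
      rw [hcast]
      constructor <;> linarith

lemma delta_pow_eig {R : Type*} [CommRing R] (β : R) (L : ℕ) (s : ℕ → R)
    (h : ℤ → R)
    (hrec' : ∀ n : ℤ, β * (n : R) * h n
      = ∑ k ∈ Finset.Icc 1 L, (k : R) * s k * h (n - (k : ℤ)))
    (a : ℤ) :
    ∀ (p : ℕ) (m : ℤ),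
      ∑ j ∈ Finset.Icc a (a + (p : ℤ) * (L : ℤ)),
        (((mulOp R (Spoly R L s) + β • eulerD R) ^ p)
            (HahnSeries.single a (1:R))).coeff j * h (m - j)
      = (β * (m : R)) ^ p * h (m - a) := by
  intro p
  induction p with
  | zero =>
    intro m
    simp only [Nat.cast_zero, zero_mul, add_zero, Finset.Icc_self, Finset.sum_singleton,
      pow_zero, Module.End.one_apply, HahnSeries.coeff_single_same, one_mul]
  | succ p ih =>
    intro m
    have hcast : ((p + 1 : ℕ) : ℤ) * (L : ℤ) = (p : ℤ) * L + L := by push_cast; ring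
    set Δ := mulOp R (Spoly R L s) + β • eulerD R with hΔ
    set g := (Δ ^ p) (HahnSeries.single a (1:R)) with hg
    have hsupp := delta_pow_supp β L s a p
    rw [← hΔ, ← hg] at hsupp
    have hstep : ∀ j : ℤ, ((Δ ^ (p+1)) (HahnSeries.single a (1:R))).coeff j
        = (∑ k ∈ Finset.Icc 1 L, (k : R) * s k * g.coeff (j - (k : ℤ)))
          + β * (j : R) * g.coeff j := by
      intro j
      rw [pow_succ', Module.End.mul_apply, hΔ, delta_coeff, ← hΔ, ← hg]
    calc ∑ j ∈ Finset.Icc a (a + ((p+1 : ℕ) : ℤ) * (L : ℤ)),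
          ((Δ ^ (p+1)) (HahnSeries.single a (1:R))).coeff j * h (m - j)
        = ∑ j ∈ Finset.Icc a (a + ((p+1 : ℕ) : ℤ) * (L : ℤ)),
            ((∑ k ∈ Finset.Icc 1 L, (k : R) * s k * g.coeff (j - (k : ℤ))) * h (m - j)
              + β * (j : R) * g.coeff j * h (m - j)) := by
          refine Finset.sum_congr rfl fun j hj => ?_
          rw [hstep j, add_mul]
      _ = (∑ j ∈ Finset.Icc a (a + ((p+1 : ℕ) : ℤ) * (L : ℤ)),
            ∑ k ∈ Finset.Icc 1 L, (k : R) * s k * g.coeff (j - (k : ℤ)) * h (m - j))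
          + ∑ j ∈ Finset.Icc a (a + ((p+1 : ℕ) : ℤ) * (L : ℤ)),
              β * (j : R) * g.coeff j * h (m - j) := by
          rw [Finset.sum_add_distrib]
          congr 1
          exact Finset.sum_congr rfl fun j hj => Finset.sum_mul _ _ _
      _ = (∑ j ∈ Finset.Icc a (a + (p : ℤ) * (L : ℤ)),
            ∑ k ∈ Finset.Icc 1 L, (k : R) * s k * g.coeff j * h (m - (k : ℤ) - j))
          + ∑ j ∈ Finset.Icc a (a + (p : ℤ) * (L : ℤ)),
              β * (j : R) * g.coeff j * h (m - j) := by
          congr 1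
          · -- reindex the shifted sum
            rw [Finset.sum_comm, Finset.sum_comm (s := Finset.Icc a (a + (p : ℤ) * (L:ℤ)))]
            refine Finset.sum_congr rfl fun k hk => ?_
            obtain ⟨hk1, hk2⟩ := Finset.mem_Icc.mp hk
            have hk1' : (1 : ℤ) ≤ k := by exact_mod_cast hk1
            have hk2' : (k : ℤ) ≤ L := by exact_mod_cast hk2
            have hsub : Finset.Icc (a + (k:ℤ)) (a + (p : ℤ) * L + (k:ℤ))
                ⊆ Finset.Icc a (a + ((p+1 : ℕ) : ℤ) * (L : ℤ)) := by
              apply Finset.Icc_subset_Icc <;> rw [hcast] at * <;> linarith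
            rw [← Finset.sum_subset hsub (fun j hjb hjn => ?_)]
            · rw [← Finset.map_add_right_Icc a (a + (p : ℤ) * L) (k : ℤ), Finset.sum_map]
              refine Finset.sum_congr rfl fun j hj => ?_
              have e1 : j + (k : ℤ) - (k : ℤ) = j := by ring
              have e2 : m - (j + (k : ℤ)) = m - (k : ℤ) - j := by ring
              rw [addRightEmbedding_apply, e1, e2]
            · have : g.coeff (j - (k : ℤ)) = 0 := by
                by_contra hnz
                obtain ⟨h1, h2⟩ := hsupp _ hnz
                exact hjn (Finset.mem_Icc.mpr ⟨by linarith, by linarith⟩)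
              rw [this, mul_zero, zero_mul]
          · symm
            refine Finset.sum_subset (Finset.Icc_subset_Icc le_rfl ?_) (fun j hjb hjn => ?_)
            · rw [hcast]
              have hL0 : (0 : ℤ) ≤ L := by positivity
              linarith
            · have : g.coeff j = 0 := by
                by_contra hnz
                exact hjn (Finset.mem_Icc.mpr (hsupp _ hnz))
              rw [this, mul_zero, zero_mul]
      _ = ∑ j ∈ Finset.Icc a (a + (p : ℤ) * (L : ℤ)),
            (β * (m : R)) * (g.coeff j * h (m - j)) := by
          rw [← Finset.sum_add_distrib]
          refine Finset.sum_congr rfl fun j hj => ?_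
          have h1 : (∑ k ∈ Finset.Icc 1 L, (k : R) * s k * g.coeff j * h (m - (k:ℤ) - j))
              = g.coeff j * ∑ k ∈ Finset.Icc 1 L, (k : R) * s k * h ((m - j) - (k:ℤ)) := by
            rw [Finset.mul_sum]
            refine Finset.sum_congr rfl fun k hk => ?_
            rw [sub_right_comm]
            ring
          rw [h1, ← hrec' (m - j)]
          push_cast
          ring
      _ = (β * (m : R)) ^ (p + 1) * h (m - a) := by
          rw [← Finset.mul_sum, ih m, pow_succ']
          ring

/-- the finite-band multiplicative relation
`Ψ⁺_i = γ • (x · Σ_j Q⁺_{ij} Ψ⁺_j)`, with `Q⁺_{ij} ≠ 0` only for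
`i−1 ≤ j ≤ i−1+LM` (componentwise form of `(γx)⁻¹ Ψ⃗⁺ = Q⁺ Ψ⃗⁺`). -/
theorem adapted_basis_plus_multiplicative_system (R : Type*) [CommRing R] (β γ : R)
    (G : Polynomial R) (hG : G.coeff 0 = 1)
    (ρ : ℤ → Rˣ) (hρ0 : ρ 0 = 1)
    (hρ : ∀ n : ℤ, (ρ n : R) = γ * G.eval ((n : R) * β) * (ρ (n - 1) : R))
    (L : ℕ) (hL : 1 ≤ L) (s : ℕ → R)
    (h : ℤ → R) (h0 : h 0 = 1) (hneg : ∀ n : ℤ, n < 0 → h n = 0)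
    (hrec : ∀ n : ℤ, 1 ≤ n →
      β * (n : R) * h n = ∑ k ∈ Finset.Icc 1 L, (k : R) * s k * h (n - (k : ℤ)))
    (Ψp : ℤ → LaurentSeries R)
    (hΨ : ∀ k n : ℤ, (Ψp k).coeff n = γ * (ρ (n - 1) : R) * h (n - k)) :
    ∀ i : ℤ,
      (∀ j : ℤ, Qplus R β G L s i j ≠ 0 →
        i - 1 ≤ j ∧ j ≤ i - 1 + (L : ℤ) * (G.natDegree : ℤ)) ∧
      Ψp i = γ • (HahnSeries.single (1 : ℤ) (1 : R) *
        ∑ j ∈ Finset.Icc (i - 1) (i - 1 + (L : ℤ) * (G.natDegree : ℤ)),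
          Qplus R β G L s i j • Ψp j) := by
  intro i
  have hrec' : ∀ n : ℤ, β * (n : R) * h n
      = ∑ k ∈ Finset.Icc 1 L, (k : R) * s k * h (n - (k : ℤ)) := by
    intro n
    rcases lt_or_ge n 1 with hn | hn
    · have hls : β * (n : R) * h n = 0 := by
        rcases lt_trichotomy n 0 with h1 | h1 | h1
        · rw [hneg n h1, mul_zero]
        · subst h1; norm_num
        · omega
      rw [hls]
      symm
      refine Finset.sum_eq_zero fun k hk => ?_
      have hk1 := (Finset.mem_Icc.mp hk).1
      rw [hneg (n - k) (by omega), mul_zero]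
    · exact hrec n hn
  have hQ : ∀ j : ℤ, Qplus R β G L s i j
      = ∑ p ∈ Finset.range (G.natDegree + 1),
          G.coeff p * (((mulOp R (Spoly R L s) + β • eulerD R) ^ p)
            (HahnSeries.single (i-1) (1:R))).coeff j := by
    intro j
    simp only [Qplus, Vplus]
    rw [Polynomial.aeval_eq_sum_range, LinearMap.sum_apply]
    rw [show ((∑ p ∈ Finset.range (G.natDegree + 1),
          (G.coeff p • (mulOp R (Spoly R L s) + β • eulerD R) ^ p)
            (HahnSeries.single (i-1) (1:R))).coeff j)
        = ∑ p ∈ Finset.range (G.natDegree + 1),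
            ((G.coeff p • (mulOp R (Spoly R L s) + β • eulerD R) ^ p)
              (HahnSeries.single (i-1) (1:R))).coeff j
      from map_sum (HahnSeries.coeff.addMonoidHom j) _ _]
    exact Finset.sum_congr rfl fun p hp => by
      rw [LinearMap.smul_apply, HahnSeries.coeff_smul, smul_eq_mul]
  have hsupp := delta_pow_supp β L s (i - 1)
  have hL0 : (0 : ℤ) ≤ L := by positivity
  have hband : ∀ j : ℤ, Qplus R β G L s i j ≠ 0 →
      i - 1 ≤ j ∧ j ≤ i - 1 + (L : ℤ) * (G.natDegree : ℤ) := by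
    intro j hQj
    rw [hQ j] at hQj
    obtain ⟨p, hp, hpne⟩ := Finset.exists_ne_zero_of_sum_ne_zero hQj
    have hc : (((mulOp R (Spoly R L s) + β • eulerD R) ^ p)
        (HahnSeries.single (i-1) (1:R))).coeff j ≠ 0 :=
      fun hz => hpne (by rw [hz, mul_zero])
    obtain ⟨h1, h2⟩ := hsupp p j hc
    have hpM : (p : ℤ) ≤ (G.natDegree : ℤ) := by
      have := Nat.lt_succ_iff.mp (Finset.mem_range.mp hp)
      exact_mod_cast this
    refine ⟨h1, ?_⟩
    have hml : (p : ℤ) * L ≤ (L : ℤ) * (G.natDegree : ℤ) := by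
      calc (p : ℤ) * L ≤ (G.natDegree : ℤ) * L := mul_le_mul_of_nonneg_right hpM hL0
        _ = (L : ℤ) * (G.natDegree : ℤ) := mul_comm _ _
    linarith
  refine ⟨hband, ?_⟩
  ext n
  have hkey : ∑ j ∈ Finset.Icc (i-1) (i - 1 + (L : ℤ) * (G.natDegree : ℤ)),
      Qplus R β G L s i j * h (n - 1 - j)
      = G.eval (β * ((n - 1 : ℤ) : R)) * h ((n-1) - (i-1)) := by
    calc ∑ j ∈ Finset.Icc (i-1) (i - 1 + (L : ℤ) * (G.natDegree : ℤ)),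
          Qplus R β G L s i j * h (n - 1 - j)
        = ∑ j ∈ Finset.Icc (i-1) (i - 1 + (L : ℤ) * (G.natDegree : ℤ)),
            ∑ p ∈ Finset.range (G.natDegree + 1),
              G.coeff p * ((((mulOp R (Spoly R L s) + β • eulerD R) ^ p)
                (HahnSeries.single (i-1) (1:R))).coeff j * h (n - 1 - j)) := by
          refine Finset.sum_congr rfl fun j hj => ?_
          rw [hQ j, Finset.sum_mul]
          exact Finset.sum_congr rfl fun p hp => by ring
      _ = ∑ p ∈ Finset.range (G.natDegree + 1),
            G.coeff p * ∑ j ∈ Finset.Icc (i-1) (i - 1 + (L : ℤ) * (G.natDegree : ℤ)),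
              (((mulOp R (Spoly R L s) + β • eulerD R) ^ p)
                (HahnSeries.single (i-1) (1:R))).coeff j * h (n - 1 - j) := by
          rw [Finset.sum_comm]
          exact Finset.sum_congr rfl fun p hp => by rw [Finset.mul_sum]
      _ = ∑ p ∈ Finset.range (G.natDegree + 1),
            G.coeff p * ((β * ((n - 1 : ℤ) : R)) ^ p * h ((n-1) - (i-1))) := by
          refine Finset.sum_congr rfl fun p hp => ?_
          congr 1
          have hpM : (p : ℤ) ≤ (G.natDegree : ℤ) := by
            have := Nat.lt_succ_iff.mp (Finset.mem_range.mp hp)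
            exact_mod_cast this
          have hml : (p : ℤ) * L ≤ (L : ℤ) * (G.natDegree : ℤ) := by
            calc (p : ℤ) * L ≤ (G.natDegree : ℤ) * L := mul_le_mul_of_nonneg_right hpM hL0
              _ = (L : ℤ) * (G.natDegree : ℤ) := mul_comm _ _
          have hsub : Finset.Icc (i-1) (i - 1 + (p : ℤ) * (L : ℤ))
              ⊆ Finset.Icc (i-1) (i - 1 + (L : ℤ) * (G.natDegree : ℤ)) :=
            Finset.Icc_subset_Icc le_rfl (by linarith)
          rw [← Finset.sum_subset hsub (fun j hjb hjn => ?_)]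
          · exact delta_pow_eig β L s h hrec' (i-1) p (n-1)
          · have hz : (((mulOp R (Spoly R L s) + β • eulerD R) ^ p)
                (HahnSeries.single (i-1) (1:R))).coeff j = 0 := by
              by_contra hnz
              exact hjn (Finset.mem_Icc.mpr (hsupp p j hnz))
            rw [hz, zero_mul]
      _ = G.eval (β * ((n - 1 : ℤ) : R)) * h ((n-1) - (i-1)) := by
          rw [Polynomial.eval_eq_sum_range, Finset.sum_mul]
          exact Finset.sum_congr rfl fun p hp => by ring
  rw [hΨ i n, HahnSeries.coeff_smul, smul_eq_mul, single_mul_coeff', one_mul]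
  rw [show ((∑ j ∈ Finset.Icc (i - 1) (i - 1 + (L : ℤ) * (G.natDegree : ℤ)),
        Qplus R β G L s i j • Ψp j).coeff (n - 1))
      = ∑ j ∈ Finset.Icc (i - 1) (i - 1 + (L : ℤ) * (G.natDegree : ℤ)),
          (Qplus R β G L s i j • Ψp j).coeff (n - 1)
    from map_sum (HahnSeries.coeff.addMonoidHom (n - 1)) _ _]
  have hfac : ∑ j ∈ Finset.Icc (i - 1) (i - 1 + (L : ℤ) * (G.natDegree : ℤ)),
      (Qplus R β G L s i j • Ψp j).coeff (n - 1)
      = γ * (ρ (n - 1 - 1) : R) *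
        ∑ j ∈ Finset.Icc (i - 1) (i - 1 + (L : ℤ) * (G.natDegree : ℤ)),
          Qplus R β G L s i j * h (n - 1 - j) := by
    rw [Finset.mul_sum]
    refine Finset.sum_congr rfl fun j hj => ?_
    rw [HahnSeries.coeff_smul, smul_eq_mul, hΨ j (n-1)]
    ring
  rw [hfac, hkey]
  have hρn : (ρ (n-1) : R) = γ * G.eval (((n - 1 : ℤ) : R) * β) * (ρ (n - 1 - 1) : R) :=
    hρ (n-1)
  rw [hρn]
  have e3 : (n - 1) - (i - 1) = n - i := by ring
  rw [e3, mul_comm β (((n - 1 : ℤ) : R))]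
  ring
end

section
/- Let μ = (μ_1 ≥ μ_2 ≥ … ≥ μ_ℓ > 0) be a partition with ℓ parts and let N ≥ μ_1. Then the evaluation at t = 0 (all variables t_j set to 0) of the n-fold composite ∇_N(x_1) ∘ ∇_N(x_2) ∘ ⋯ ∘ ∇_N(x_n) applied to p_μ equals Σ_{σ ∈ S_n} ∏_{k=1}^{n} μ_k x_{σ(k)}^{μ_k − 1} if ℓ = n, and equals 0 if ℓ ≠ n (equivalently, it equals δ_{ℓ(μ),n} · |aut(μ)| · ∂^n m_μ(x_1,…,x_n)/∂x_1⋯∂x_n, where m_μ is the monomial symmetric polynomial). -/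
open MvPolynomial

/-- The truncated current operator `∇_N(x) = Σ_{j=1}^N x^{j-1} ∂/∂t_j` on the
polynomial ring `R[t_1, t_2, …]` (variables indexed by positive naturals). -/
noncomputable def nablaOp (R : Type*) [CommRing R] (N : ℕ) (x : R) :
    Module.End R (MvPolynomial ℕ R) :=
  ∑ j ∈ Finset.Icc 1 N, x ^ (j - 1) • (MvPolynomial.pderiv j).toLinearMap

/-- The power-sum monomial `p_μ = ∏_k μ_k t_{μ_k}` for a partition with parts
`μ 0, …, μ (ℓ-1)`. -/
noncomputable def powerSumMonomial (R : Type*) [CommRing R] (ℓ : ℕ) (μ : ℕ → ℕ) :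
    MvPolynomial ℕ R :=
  ∏ k ∈ Finset.range ℓ, (MvPolynomial.C (μ k : R) * MvPolynomial.X (μ k))

lemma pderiv_finset_prod {R : Type*} [CommRing R] (j : ℕ) (S : Finset ℕ)
    (g : ℕ → MvPolynomial ℕ R) :
    pderiv j (∏ k ∈ S, g k) = ∑ k ∈ S, pderiv j (g k) * ∏ l ∈ S.erase k, g l := by
  classical
  induction S using Finset.induction_on with
  | empty => simp
  | @insert a s ha ih =>
    rw [Finset.prod_insert ha, Derivation.leibniz, ih, Finset.sum_insert ha,
      Finset.erase_insert ha, smul_eq_mul, smul_eq_mul, Finset.mul_sum]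
    rw [mul_comm ((∏ k ∈ s, g k)) (pderiv j (g a)), add_comm]
    congr 1
    apply Finset.sum_congr rfl
    intro k hk
    rw [Finset.erase_insert_of_ne (by rintro rfl; exact ha hk),
      Finset.prod_insert (fun h => ha (Finset.mem_of_mem_erase h))]
    ring

lemma nabla_apply_prod {R : Type*} [CommRing R] (N : ℕ) (x : R) (ν : ℕ → ℕ) (S : Finset ℕ)
    (h1 : ∀ k ∈ S, 0 < ν k) (h2 : ∀ k ∈ S, ν k ≤ N) :
    nablaOp R N x (∏ k ∈ S, (C (ν k : R) * X (ν k))) =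
      ∑ k ∈ S, ((ν k : R) * x ^ (ν k - 1)) •
        ∏ l ∈ S.erase k, (C (ν l : R) * X (ν l)) := by
  classical
  unfold nablaOp
  rw [LinearMap.sum_apply]
  have hder : ∀ j : ℕ, (pderiv j) (∏ k ∈ S, (C (ν k : R) * X (ν k))) =
      ∑ k ∈ S, (if j = ν k then (C (ν k : R)) else 0) *
        ∏ l ∈ S.erase k, (C (ν l : R) * X (ν l)) := by
    intro j
    rw [pderiv_finset_prod]
    refine Finset.sum_congr rfl fun k hk => ?_
    congr 1
    rw [Derivation.leibniz, pderiv_X, pderiv_C]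
    simp [Pi.single_apply, eq_comm]
  calc (∑ j ∈ Finset.Icc 1 N,
        (x ^ (j - 1) • (pderiv j).toLinearMap) (∏ k ∈ S, (C (ν k : R) * X (ν k))))
      = ∑ j ∈ Finset.Icc 1 N, ∑ k ∈ S, x ^ (j-1) •
          ((if j = ν k then (C (ν k : R)) else 0) *
            ∏ l ∈ S.erase k, (C (ν l : R) * X (ν l))) := by
        refine Finset.sum_congr rfl fun j hj => ?_
        rw [LinearMap.smul_apply, Derivation.coeFn_coe, hder j, Finset.smul_sum]
    _ = ∑ k ∈ S, ∑ j ∈ Finset.Icc 1 N, x ^ (j-1) •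
          ((if j = ν k then (C (ν k : R)) else 0) *
            ∏ l ∈ S.erase k, (C (ν l : R) * X (ν l))) := Finset.sum_comm
    _ = ∑ k ∈ S, ((ν k : R) * x ^ (ν k - 1)) •
        ∏ l ∈ S.erase k, (C (ν l : R) * X (ν l)) := by
        refine Finset.sum_congr rfl fun k hk => ?_
        rw [Finset.sum_eq_single (ν k)]
        · rw [if_pos rfl]
          rw [smul_eq_C_mul, smul_eq_C_mul, map_mul]
          ring
        · intro j hj hne
          rw [if_neg hne, zero_mul, smul_zero]
        · intro h
          exact absurd (Finset.mem_Icc.2 ⟨h1 k hk, h2 k hk⟩) h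

lemma eval_zero_prod {R : Type*} [CommRing R] (ν : ℕ → ℕ) (S : Finset ℕ) :
    MvPolynomial.eval (fun _ => (0 : R)) (∏ k ∈ S, (C (ν k : R) * X (ν k))) =
      if S = ∅ then 1 else 0 := by
  classical
  rcases eq_or_ne S ∅ with h | h
  · simp [h]
  · rw [if_neg h, map_prod]
    obtain ⟨k, hk⟩ := Finset.nonempty_of_ne_empty h
    refine Finset.prod_eq_zero hk ?_
    simp


lemma snoc_injective {n : ℕ} {f : Fin n → ℕ} {k : ℕ} (hf : Function.Injective f)
    (hk : ∀ i, f i ≠ k) : Function.Injective (Fin.snoc f k : Fin (n + 1) → ℕ) := by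
  have H : ∀ a b : Fin (n + 1), (Fin.snoc f k : Fin (n + 1) → ℕ) a = (Fin.snoc f k : Fin (n + 1) → ℕ) b → a = b := by
    intro a
    induction a using Fin.lastCases with
    | last =>
      intro b
      induction b using Fin.lastCases with
      | last => intro _; rfl
      | cast b' =>
        simp only [Fin.snoc_last, Fin.snoc_castSucc]
        intro h
        exact absurd h.symm (hk b')
    | cast a' =>
      intro b
      induction b using Fin.lastCases with
      | last =>
        simp only [Fin.snoc_last, Fin.snoc_castSucc]
        intro h
        exact absurd h (hk a')
      | cast b' =>
        simp only [Fin.snoc_castSucc]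
        intro h
        exact congrArg _ (hf h)
  exact fun {a b} hab => H a b hab

lemma key_lemma {R : Type*} [CommRing R] (N : ℕ) (ν : ℕ → ℕ) :
    ∀ (n : ℕ) (x : Fin n → R) (S : Finset ℕ),
      (∀ k ∈ S, 0 < ν k) → (∀ k ∈ S, ν k ≤ N) →
    MvPolynomial.eval (fun _ => (0 : R))
        (((List.ofFn fun i : Fin n => nablaOp R N (x i)).prod)
          (∏ k ∈ S, (C (ν k : R) * X (ν k)))) =
      if S.card = n then
        ∑ f ∈ (Fintype.piFinset fun _ : Fin n => S).filter Function.Injective,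
          ∏ i, (ν (f i) : R) * x i ^ (ν (f i) - 1)
      else 0 := by
  classical
  intro n
  induction n with
  | zero =>
    intro x S h1 h2
    rw [List.ofFn_zero, List.prod_nil, Module.End.one_apply, eval_zero_prod]
    rcases eq_or_ne S ∅ with h | h
    · subst h
      rw [if_pos rfl, if_pos Finset.card_empty]
      have hset : (Fintype.piFinset fun _ : Fin 0 => (∅ : Finset ℕ)).filter
          Function.Injective = {fun i : Fin 0 => i.elim0} := by
        refine Finset.eq_singleton_iff_unique_mem.2 ⟨?_, ?_⟩
        · rw [Finset.mem_filter, Fintype.mem_piFinset]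
          exact ⟨fun a => a.elim0, fun a b _ => a.elim0⟩
        · intro f _
          funext i
          exact i.elim0
      rw [hset, Finset.sum_singleton]
      simp
    · rw [if_neg h, if_neg (by simpa [Finset.card_eq_zero] using h)]
  | succ n ih =>
    intro x S h1 h2
    rw [List.ofFn_succ', List.concat_eq_append, List.prod_append, List.prod_cons,
      List.prod_nil, mul_one, Module.End.mul_apply,
      nabla_apply_prod N (x (Fin.last n)) ν S h1 h2, map_sum, map_sum]
    have hterm : ∀ k ∈ S,
        MvPolynomial.eval (fun _ => (0 : R))
          (((List.ofFn fun i : Fin n => nablaOp R N (x i.castSucc)).prod)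
            (((ν k : R) * x (Fin.last n) ^ (ν k - 1)) •
              ∏ l ∈ S.erase k, (C (ν l : R) * X (ν l)))) =
        ((ν k : R) * x (Fin.last n) ^ (ν k - 1)) *
          (if (S.erase k).card = n then
            ∑ f ∈ (Fintype.piFinset fun _ : Fin n => S.erase k).filter Function.Injective,
              ∏ i, (ν (f i) : R) * (x i.castSucc) ^ (ν (f i) - 1)
          else 0) := by
      intro k hk
      rw [map_smul, smul_eq_C_mul, map_mul, eval_C,
        ih (fun i => x i.castSucc) (S.erase k)
          (fun l hl => h1 l (Finset.mem_of_mem_erase hl))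
          (fun l hl => h2 l (Finset.mem_of_mem_erase hl))]
    rw [Finset.sum_congr rfl hterm]
    rcases eq_or_ne S.card (n+1) with hcard | hcard
    · rw [if_pos hcard]
      have herase : ∀ k ∈ S, (S.erase k).card = n := fun k hk => by
        rw [Finset.card_erase_of_mem hk, hcard]; omega
      rw [Finset.sum_congr rfl (fun k hk => by rw [if_pos (herase k hk)])]
      rw [Finset.sum_congr rfl (fun k (hk : k ∈ S) => Finset.mul_sum _ _ _), Finset.sum_sigma']
      refine Finset.sum_bij (fun p _ => Fin.snoc p.2 p.1) ?_ ?_ ?_ ?_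
      · rintro ⟨k, f⟩ hp
        rw [Finset.mem_sigma] at hp
        obtain ⟨hkS, hf⟩ := hp
        rw [Finset.mem_filter, Fintype.mem_piFinset] at hf
        obtain ⟨hfm, hfinj⟩ := hf
        rw [Finset.mem_filter, Fintype.mem_piFinset]
        constructor
        · intro i
          refine Fin.lastCases ?_ (fun i => ?_) i
          · simpa using hkS
          · simpa using Finset.mem_of_mem_erase (hfm i)
        · exact snoc_injective hfinj fun i => Finset.ne_of_mem_erase (hfm i)
      · rintro ⟨k, f⟩ hp ⟨k', f'⟩ hp' heq
        have hk : k = k' := by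
          have := congrFun heq (Fin.last n)
          simpa using this
        have hfeq : f = f' := by
          funext i
          have := congrFun heq (Fin.castSucc i)
          simpa using this
        subst hk; subst hfeq; rfl
      · intro g hg
        rw [Finset.mem_filter, Fintype.mem_piFinset] at hg
        obtain ⟨hgm, hginj⟩ := hg
        refine ⟨⟨g (Fin.last n), Fin.init g⟩, ?_, ?_⟩
        · rw [Finset.mem_sigma]
          refine ⟨hgm _, ?_⟩
          rw [Finset.mem_filter, Fintype.mem_piFinset]
          constructor
          · intro i
            refine Finset.mem_erase.2 ⟨?_, hgm _⟩
            intro h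
            exact absurd (hginj h) (Fin.castSucc_lt_last i).ne
          · exact hginj.comp (Fin.castSucc_injective n)
        · exact Fin.snoc_init_self g
      · rintro ⟨k, f⟩ hp
        simp only
        rw [Fin.prod_univ_castSucc]
        simp only [Fin.snoc_castSucc, Fin.snoc_last]
        ring
    · rw [if_neg hcard]
      refine Finset.sum_eq_zero fun k hk => ?_
      have hpos' := Finset.card_pos.2 ⟨k, hk⟩
      rw [if_neg (by rw [Finset.card_erase_of_mem hk]; omega), mul_zero]

lemma perm_conversion {R : Type*} [CommRing R] (n : ℕ) (x : Fin n → R) (μ : ℕ → ℕ) :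
    ∑ f ∈ (Fintype.piFinset fun _ : Fin n => Finset.range n).filter Function.Injective,
        ∏ i, (μ (f i) : R) * x i ^ (μ (f i) - 1) =
      ∑ σ : Equiv.Perm (Fin n), ∏ k : Fin n,
        (μ (k : ℕ) : R) * x (σ k) ^ (μ (k : ℕ) - 1) := by
  classical
  refine (Finset.sum_bij (fun (σ : Equiv.Perm (Fin n)) _ =>
    fun i : Fin n => ((σ.symm i : Fin n) : ℕ)) ?_ ?_ ?_ ?_).symm
  · intro σ _
    rw [Finset.mem_filter, Fintype.mem_piFinset]
    constructor
    · intro i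
      exact Finset.mem_range.2 (σ.symm i).isLt
    · exact Fin.val_injective.comp σ.symm.injective
  · intro σ _ σ' _ heq
    have : σ.symm = σ'.symm := by
      ext i
      exact congrFun heq i
    calc σ = σ.symm.symm := σ.symm_symm.symm
      _ = σ'.symm.symm := by rw [this]
      _ = σ' := σ'.symm_symm
  · intro f hf
    rw [Finset.mem_filter, Fintype.mem_piFinset] at hf
    obtain ⟨hfm, hfinj⟩ := hf
    set g : Fin n → Fin n := fun i => ⟨f i, Finset.mem_range.1 (hfm i)⟩ with hg
    have hginj : Function.Injective g := by
      intro a b hab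
      exact hfinj (congrArg Fin.val hab)
    have hgbij : Function.Bijective g := (Finite.injective_iff_bijective).1 hginj
    refine ⟨(Equiv.ofBijective g hgbij).symm, Finset.mem_univ _, ?_⟩
    funext i
    simp [Equiv.ofBijective, hg]
  · intro σ _
    rw [← Equiv.prod_comp σ (fun i : Fin n =>
      (μ ((σ.symm i : Fin n) : ℕ) : R) * x i ^ (μ ((σ.symm i : Fin n) : ℕ) - 1))]
    simp [Equiv.symm_apply_apply]

/-- evaluation at `t = 0` of `∇_N(x_1) ∘ ⋯ ∘ ∇_N(x_n)` applied to `p_μ`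
equals `Σ_{σ ∈ S_n} ∏_k μ_k x_{σ(k)}^{μ_k − 1}` if `ℓ(μ) = n`, and `0` otherwise. -/
theorem nabla_on_power_sum (R : Type*) [CommRing R] (n : ℕ) (x : Fin n → R)
    (ℓ : ℕ) (μ : ℕ → ℕ) (N : ℕ)
    (hpos : ∀ k < ℓ, 0 < μ k)
    (hmono : ∀ i j, i ≤ j → j < ℓ → μ j ≤ μ i)
    (hN : ∀ k < ℓ, μ k ≤ N) :
    MvPolynomial.eval (fun _ => (0 : R))
        (((List.ofFn fun i : Fin n => nablaOp R N (x i)).prod)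
          (powerSumMonomial R ℓ μ)) =
      if ℓ = n then
        ∑ σ : Equiv.Perm (Fin n), ∏ k : Fin n,
          (μ (k : ℕ) : R) * x (σ k) ^ (μ (k : ℕ) - 1)
      else 0 := by
  classical
  rw [powerSumMonomial,
    key_lemma N μ n x (Finset.range ℓ)
      (fun k hk => hpos k (Finset.mem_range.1 hk))
      (fun k hk => hN k (Finset.mem_range.1 hk)),
    Finset.card_range]
  rcases eq_or_ne ℓ n with h | h
  · subst h
    rw [if_pos rfl, if_pos rfl]
    exact perm_conversion ℓ x μ
  · rw [if_neg h, if_neg h]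
end

section
/- The conjugates of the recursion operators by multiplication by H are given by M_H⁻¹ ∘ R₊ ∘ M_H = γ • (M_x ∘ G(M_S + β•D)) and M_H ∘ R₋ ∘ M_H⁻¹ = γ • (M_x ∘ G(M_S − β•D)) as R-linear endomorphisms of formal Laurent series, where G(M_S ± β•D) := Σ_{i=0}^M g_i (M_S ± β•D)^i. (This is the identity V_± := γ⁻¹ x⁻¹ e^{∓β⁻¹ξ} ∘ R_± ∘ e^{±β⁻¹ξ} = G(Δ_±), with H = e^{β⁻¹ξ(x)} and Δ_± = S(x) ± βD.) -/
open Polynomial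

section AuxConj

variable {R : Type*} [CommRing R]

@[simp] lemma eulerD_coeff (f : LaurentSeries R) (n : ℤ) :
    (eulerD R f).coeff n = n • f.coeff n := rfl

lemma eulerD_support (f : LaurentSeries R) :
    (eulerD R f).support ⊆ f.support := fun n hn => by
  rw [HahnSeries.mem_support] at hn ⊢
  exact fun h => hn (by rw [eulerD_coeff, h, smul_zero])

lemma eulerD_mul (f g : LaurentSeries R) :
    eulerD R (f * g) = eulerD R f * g + f * eulerD R g := by
  ext n
  rw [HahnSeries.coeff_add, eulerD_coeff,
    HahnSeries.coeff_mul_left' f.isPWO_support (eulerD_support f),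
    HahnSeries.coeff_mul_right' g.isPWO_support (eulerD_support g),
    HahnSeries.coeff_mul, Finset.smul_sum, ← Finset.sum_add_distrib]
  refine Finset.sum_congr rfl (fun ij hij => ?_)
  rw [Finset.mem_addAntidiagonal] at hij
  simp only [eulerD_coeff]
  rw [← hij.2.2, add_smul, smul_mul_assoc, mul_smul_comm]

lemma eulerD_one : eulerD R (1 : LaurentSeries R) = 0 := by
  ext n
  rw [eulerD_coeff, HahnSeries.coeff_one]
  by_cases h : n = (0 : ℤ)
  · simp [h]
  · simp [h]

lemma ls_smul_mul (β : R) (u v : LaurentSeries R) : β • u * v = β • (u * v) := by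
  rw [← HahnSeries.C_mul_eq_smul, ← HahnSeries.C_mul_eq_smul]; ring

lemma ls_mul_smul (β : R) (u v : LaurentSeries R) : u * β • v = β • (u * v) := by
  rw [← HahnSeries.C_mul_eq_smul, ← HahnSeries.C_mul_eq_smul]; ring

lemma ls_neg_smul (β : R) (u : LaurentSeries R) : (-β) • u = -(β • u) := by
  rw [← HahnSeries.C_mul_eq_smul, ← HahnSeries.C_mul_eq_smul, map_neg, neg_mul]

@[simp] lemma mulOp_apply (u f : LaurentSeries R) : mulOp R u f = u * f := rfl

lemma mulOp_comp (u v : LaurentSeries R) :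
    mulOp R u ∘ₗ mulOp R v = mulOp R (u * v) := by
  ext f
  simp [mul_assoc]

lemma mulOp_one : mulOp R (1 : LaurentSeries R) = 1 := by
  ext f
  simp

lemma conjPowAux {p q a : Module.End R (LaurentSeries R)} (hqp : q * p = 1) (hpq : p * q = 1)
    (n : ℕ) :
    q * a ^ n * p = (q * a * p) ^ n := by
  have hp : ∀ x : Module.End R (LaurentSeries R), p * (q * x) = x := fun x => by
    rw [← mul_assoc, hpq, one_mul]
  induction n with
  | zero => simp [hqp]
  | succ n ih => rw [pow_succ, pow_succ, ← ih]; simp only [mul_assoc, hp]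

lemma conjAevalAux {p q a : Module.End R (LaurentSeries R)} (hqp : q * p = 1)
    (hpq : p * q = 1) (G : R[X]) :
    q * Polynomial.aeval a G * p = Polynomial.aeval (q * a * p) G := by
  rw [Polynomial.aeval_def, Polynomial.aeval_def, Polynomial.eval₂_eq_sum,
    Polynomial.eval₂_eq_sum, Polynomial.sum_def, Polynomial.sum_def,
    Finset.mul_sum, Finset.sum_mul]
  refine Finset.sum_congr rfl fun n _ => ?_
  rw [← conjPowAux hqp hpq n, ← mul_assoc q, ← Algebra.commutes (G.coeff n) q,
    mul_assoc _ q (a ^ n), mul_assoc _ (q * a ^ n) p]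

end AuxConj

/-- the conjugates of the recursion operators by `M_H` are
`M_H⁻¹ ∘ R₊ ∘ M_H = γ (M_x ∘ G(M_S + β D))` and
`M_H ∘ R₋ ∘ M_H⁻¹ = γ (M_x ∘ G(M_S − β D))`. -/
theorem conjugated_recursion_operators (R : Type*) [CommRing R] (β γ : R)
    (G : Polynomial R) (hG : G.coeff 0 = 1)
    (L : ℕ) (hL : 1 ≤ L) (s : ℕ → R)
    (H Hinv : LaurentSeries R)
    (hHinv : H * Hinv = 1)
    (hH0 : H.coeff 0 = 1) (hHneg : ∀ n : ℤ, n < 0 → H.coeff n = 0)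
    (hDH : β • (eulerD R H) = Spoly R L s * H) :
    mulOp R Hinv ∘ₗ Rplus R β γ G ∘ₗ mulOp R H =
      γ • (mulX R ∘ₗ
        Polynomial.aeval (mulOp R (Spoly R L s) + β • eulerD R) G) ∧
    mulOp R H ∘ₗ Rminus R β γ G ∘ₗ mulOp R Hinv =
      γ • (mulX R ∘ₗ
        Polynomial.aeval (mulOp R (Spoly R L s) - β • eulerD R) G) := by
  have hHinv' : Hinv * H = 1 := by rw [mul_comm]; exact hHinv
  have hQP : mulOp R Hinv * mulOp R H = (1 : Module.End R (LaurentSeries R)) := by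
    rw [Module.End.mul_eq_comp, mulOp_comp, hHinv', mulOp_one]
  have hPQ : mulOp R H * mulOp R Hinv = (1 : Module.End R (LaurentSeries R)) := by
    rw [Module.End.mul_eq_comp, mulOp_comp, hHinv, mulOp_one]
  have hconjD : mulOp R Hinv * (β • eulerD R) * mulOp R H
      = mulOp R (Spoly R L s) + β • eulerD R := by
    apply LinearMap.ext; intro f
    simp only [Module.End.mul_eq_comp, LinearMap.comp_apply, LinearMap.add_apply,
      LinearMap.smul_apply, mulOp_apply]
    rw [eulerD_mul, smul_add, mul_add]
    congr 1
    · rw [← ls_smul_mul, hDH,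
        show Hinv * (Spoly R L s * H * f) = Hinv * H * (Spoly R L s * f) by ring,
        hHinv', one_mul]
    · rw [ls_mul_smul, ← mul_assoc, hHinv', one_mul]
  have hDHinv : H * (β • eulerD R Hinv) = -(Spoly R L s) := by
    have h0 : eulerD R H * Hinv + H * eulerD R Hinv = 0 := by
      rw [← eulerD_mul, hHinv, eulerD_one]
    have h1 := congrArg (fun z : LaurentSeries R => β • z) h0
    simp only [smul_add, smul_zero] at h1
    rw [← ls_smul_mul, ← ls_mul_smul, hDH] at h1
    rw [show Spoly R L s * H * Hinv = Spoly R L s by rw [mul_assoc, hHinv, mul_one]] at h1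
    linear_combination h1
  have hconjDm : mulOp R H * ((-β) • eulerD R) * mulOp R Hinv
      = mulOp R (Spoly R L s) - β • eulerD R := by
    apply LinearMap.ext; intro f
    simp only [Module.End.mul_eq_comp, LinearMap.comp_apply, LinearMap.sub_apply,
      LinearMap.smul_apply, mulOp_apply]
    rw [eulerD_mul, ls_mul_smul, mul_add, ls_neg_smul, smul_add]
    have e1 : β • (H * (eulerD R Hinv * f)) = -(Spoly R L s * f) := by
      rw [← mul_assoc, ← ls_smul_mul, ← ls_mul_smul, hDHinv]; ring
    have e2 : β • (H * (Hinv * eulerD R f)) = β • eulerD R f := by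
      rw [← mul_assoc, hHinv, one_mul]
    rw [e1, e2, neg_add, neg_neg, ← sub_eq_add_neg]
  have hcomm : ∀ u : LaurentSeries R, mulOp R u * mulX R = mulX R * mulOp R u := by
    intro u
    rw [mulX, Module.End.mul_eq_comp, Module.End.mul_eq_comp, mulOp_comp, mulOp_comp, mul_comm]
  constructor
  · rw [Rplus, LinearMap.smul_comp, LinearMap.comp_smul]
    congr 1
    simp only [← Module.End.mul_eq_comp]
    rw [← mul_assoc, ← mul_assoc, hcomm Hinv, mul_assoc (mulX R), mul_assoc (mulX R),
      conjAevalAux hQP hPQ, hconjD]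
  · rw [Rminus, LinearMap.smul_comp, LinearMap.comp_smul]
    congr 1
    simp only [← Module.End.mul_eq_comp]
    rw [← mul_assoc, ← mul_assoc, hcomm H, mul_assoc (mulX R), mul_assoc (mulX R),
      conjAevalAux hPQ hQP, hconjDm]
end
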